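/- arXiv:1702.04163 — 3 statements merged into one kernel-verified Lean document; each statement's English description precedes it below -/
import Mathlib

section
/- For every ordinal alpha, the order type of the set of finite subsets of {beta : beta < alpha}, ordered antilexicographically, equals 2^alpha (ordinal exponentiation). -/
open scoped Classical symmDiff

/-- The antilexicographic order on finite sets of ordinals:
`L₁ < L₂` iff the maximum of the symmetric difference belongs to `L₂`. -/
def antilex (L₁ L₂ : Finset Ordinal) : Prop :=
  ∃ h : (L₁ ∆ L₂).Nonempty, (L₁ ∆ L₂).max' h ∈ L₂

/-- `Lset α` is the finite set of exponents appearing in the base-2 Cantor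
normal form of the ordinal `α`. -/
noncomputable def Lset (α : Ordinal) : Finset Ordinal :=
  ((Ordinal.CNF 2 α).map Prod.fst).toFinset

noncomputable def eSum (s : Finset Ordinal) : Ordinal :=
  if h : s.Nonempty then 2 ^ (s.max' h) + eSum (s.erase (s.max' h)) else 0
termination_by s.card
decreasing_by exact Finset.card_erase_lt_of_mem (s.max'_mem h)

lemma eSum_empty : eSum ∅ = 0 := by rw [eSum]; simp

lemma eSum_nonempty (s : Finset Ordinal) (h : s.Nonempty) :
    eSum s = 2 ^ (s.max' h) + eSum (s.erase (s.max' h)) := by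
  rw [eSum, dif_pos h]

lemma eSum_split (c : Ordinal) (s : Finset Ordinal) :
    eSum s = eSum (s.filter (c < ·)) + eSum (s.filter (· ≤ c)) := by
  induction s using Finset.strongInduction with
  | _ s ih =>
    by_cases hh : (s.filter (c < ·)).Nonempty
    · have hs : s.Nonempty := by
        obtain ⟨β, hβ⟩ := hh
        exact ⟨β, (Finset.mem_filter.mp hβ).1⟩
      set m := s.max' hs with hm
      have hms : m ∈ s := s.max'_mem hs
      have hcm : c < m := by
        obtain ⟨β, hβ⟩ := hh
        obtain ⟨hβs, hβc⟩ := Finset.mem_filter.mp hβ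
        exact lt_of_lt_of_le hβc (s.le_max' β hβs)
      have hmhigh : m ∈ s.filter (c < ·) := Finset.mem_filter.mpr ⟨hms, hcm⟩
      have hmaxhigh : (s.filter (c < ·)).max' hh = m := by
        refine le_antisymm (Finset.max'_le _ _ _ fun β hβ => s.le_max' β (Finset.mem_filter.mp hβ).1) (Finset.le_max' _ _ hmhigh)
      have h1 : (s.erase m).filter (c < ·) = (s.filter (c < ·)).erase m := by
        ext β; simp [Finset.mem_filter, Finset.mem_erase]; tauto
      have h2 : (s.erase m).filter (· ≤ c) = s.filter (· ≤ c) := by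
        ext β; simp only [Finset.mem_filter, Finset.mem_erase]
        constructor
        · tauto
        · rintro ⟨hβs, hβc⟩
          exact ⟨⟨fun h => absurd (h ▸ hβc) (not_le.mpr hcm), hβs⟩, hβc⟩
      rw [eSum_nonempty s hs, ih (s.erase m) (Finset.erase_ssubset hms), h1, h2,
        eSum_nonempty (s.filter (c < ·)) hh, hmaxhigh, ← hm, add_assoc]
    · have hempty : s.filter (c < ·) = ∅ := Finset.not_nonempty_iff_eq_empty.mp hh
      have hall : s.filter (· ≤ c) = s := by
        apply Finset.filter_true_of_mem
        intro β hβ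
        by_contra h
        exact hh ⟨β, Finset.mem_filter.mpr ⟨hβ, not_le.mp h⟩⟩
      rw [hempty, hall, eSum_empty, zero_add]

lemma eSum_lt (s : Finset Ordinal) : ∀ α : Ordinal, (∀ β ∈ s, β < α) → eSum s < 2 ^ α := by
  induction s using Finset.strongInduction with
  | _ s ih =>
    intro α hα
    rcases s.eq_empty_or_nonempty with rfl | hs
    · rw [eSum_empty]; exact Ordinal.opow_pos α zero_lt_two
    · set m := s.max' hs with hm
      have hms : m ∈ s := s.max'_mem hs
      have hlt : eSum (s.erase m) < 2 ^ m := by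
        refine ih (s.erase m) (Finset.erase_ssubset hms) m fun β hβ => ?_
        obtain ⟨hne, hβs⟩ := Finset.mem_erase.mp hβ
        exact lt_of_le_of_ne (s.le_max' β hβs) hne
      have h2 : (2:Ordinal) ^ m + eSum (s.erase m) < 2 ^ m + 2 ^ m :=
        add_lt_add_right hlt _
      have h3 : (2:Ordinal) ^ m + 2 ^ m = 2 ^ (m + 1) := by
        rw [Ordinal.opow_add, Ordinal.opow_one, (by norm_num : (2:Ordinal) = 1 + 1), mul_add,
          mul_one]
      have h4 : (2:Ordinal) ^ (m + 1) ≤ 2 ^ α := by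
        apply Ordinal.opow_le_opow_right zero_lt_two
        rw [Ordinal.add_one_eq_succ, Order.succ_le_iff]
        exact hα m hms
      rw [eSum_nonempty s hs, ← hm]
      exact lt_of_lt_of_le (h3 ▸ h2) h4

lemma eSum_surj : ∀ o : Ordinal, ∀ α : Ordinal, o < 2 ^ α →
    ∃ s : Finset Ordinal, (∀ β ∈ s, β < α) ∧ eSum s = o := by
  intro o
  induction o using Ordinal.induction with
  | _ o ih =>
    intro α ho
    rcases eq_or_ne o 0 with rfl | h0
    · exact ⟨∅, by simp, eSum_empty⟩
    · set b := Ordinal.log 2 o with hb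
      have h2b : (2:Ordinal) ^ b ≤ o := Ordinal.opow_log_le_self 2 h0
      have hb0 : (2:Ordinal) ^ b ≠ 0 := (Ordinal.opow_pos b zero_lt_two).ne'
      have hmod : o % 2 ^ b < 2 ^ b := Ordinal.mod_lt o hb0
      have hmodo : o % 2 ^ b < o := hmod.trans_le h2b
      obtain ⟨s', hs', hes'⟩ := ih _ hmodo b hmod
      have hbα : b < α := by
        have h : (2:Ordinal) ^ b < 2 ^ α := lt_of_le_of_lt h2b ho
        exact (Ordinal.opow_lt_opow_iff_right one_lt_two).mp h
      have hbs' : b ∉ s' := fun h => lt_irrefl b (hs' b h)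
      refine ⟨insert b s', ?_, ?_⟩
      · intro β hβ
        rcases Finset.mem_insert.mp hβ with rfl | h
        · exact hbα
        · exact (hs' β h).trans hbα
      · have hne : (insert b s').Nonempty := ⟨b, Finset.mem_insert_self _ _⟩
        have hmax : (insert b s').max' hne = b := by
          refine le_antisymm (Finset.max'_le _ _ _ fun β hβ => ?_) (Finset.le_max' _ _ (Finset.mem_insert_self _ _))
          rcases Finset.mem_insert.mp hβ with rfl | h
          · exact le_rfl
          · exact (hs' β h).le
        rw [eSum_nonempty _ hne, hmax, Finset.erase_insert hbs', hes']
        have hdiv : o / 2 ^ b = 1 := by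
          have h1 : o / 2 ^ b < 2 := by
            rw [Ordinal.div_lt hb0]
            have h2 := Ordinal.lt_opow_succ_log_self one_lt_two o
            calc o < 2 ^ Order.succ (Ordinal.log 2 o) := h2
              _ = 2 ^ b * 2 := by rw [← hb, Ordinal.opow_succ]
          have h2 : 0 < o / 2 ^ b := (Ordinal.div_pos hb0).mpr h2b
          have h1' : o / 2 ^ b ≤ 1 :=
            Order.lt_succ_iff.mp (by rw [Ordinal.succ_one]; exact h1)
          exact le_antisymm h1' (Order.one_le_iff_pos.mpr h2)
        have hdm := Ordinal.div_add_mod o (2 ^ b)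
        rw [hdiv, mul_one] at hdm
        exact hdm

lemma max'_eq_of_eq {s t : Finset Ordinal} (h : s = t) (hs : s.Nonempty) :
    s.max' hs = t.max' (h ▸ hs) := by subst h; rfl

lemma antilex_of_max'_mem {s t : Finset Ordinal} (hne : (s ∆ t).Nonempty)
    (hm : (s ∆ t).max' hne ∈ s) : antilex t s := by
  have he : t ∆ s = s ∆ t := symmDiff_comm t s
  have hne' : (t ∆ s).Nonempty := by rw [he]; exact hne
  refine ⟨hne', ?_⟩
  rw [max'_eq_of_eq he hne']
  exact hm

lemma antilex_eSum_lt {s t : Finset Ordinal} (h : antilex s t) : eSum s < eSum t := by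
  obtain ⟨hne, hmem⟩ := h
  set γ := (s ∆ t).max' hne with hγ
  have hγst : γ ∈ s ∆ t := (s ∆ t).max'_mem hne
  have hγs : γ ∉ s := by
    rw [Finset.mem_symmDiff] at hγst
    rcases hγst with ⟨_, h2⟩ | ⟨_, h2⟩
    · exact absurd hmem h2
    · exact h2
  have hle : ∀ β ∈ s ∆ t, β ≤ γ := fun β hβ => (s ∆ t).le_max' β hβ
  have hH : s.filter (γ < ·) = t.filter (γ < ·) := by
    ext β
    simp only [Finset.mem_filter]
    constructor
    · rintro ⟨hβs, hβγ⟩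
      refine ⟨?_, hβγ⟩
      by_contra hβt
      exact absurd (hle β (Finset.mem_symmDiff.mpr (Or.inl ⟨hβs, hβt⟩))) (not_le.mpr hβγ)
    · rintro ⟨hβt, hβγ⟩
      refine ⟨?_, hβγ⟩
      by_contra hβs
      exact absurd (hle β (Finset.mem_symmDiff.mpr (Or.inr ⟨hβt, hβs⟩))) (not_le.mpr hβγ)
  have hLs : eSum (s.filter (· ≤ γ)) < 2 ^ γ := by
    apply eSum_lt
    intro β hβ
    obtain ⟨hβs, hβγ⟩ := Finset.mem_filter.mp hβ
    exact lt_of_le_of_ne hβγ (fun h => hγs (h ▸ hβs))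
  have hLt : (2:Ordinal) ^ γ ≤ eSum (t.filter (· ≤ γ)) := by
    have hγmem : γ ∈ t.filter (· ≤ γ) := Finset.mem_filter.mpr ⟨hmem, le_rfl⟩
    have hnet : (t.filter (· ≤ γ)).Nonempty := ⟨γ, hγmem⟩
    have hmaxt : (t.filter (· ≤ γ)).max' hnet = γ :=
      le_antisymm (Finset.max'_le _ _ _ fun β hβ => (Finset.mem_filter.mp hβ).2)
        (Finset.le_max' _ _ hγmem)
    rw [eSum_nonempty _ hnet, hmaxt]
    exact le_self_add
  calc eSum s = eSum (s.filter (γ < ·)) + eSum (s.filter (· ≤ γ)) := eSum_split γ s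
    _ < eSum (s.filter (γ < ·)) + 2 ^ γ := add_lt_add_right hLs _
    _ ≤ eSum (t.filter (γ < ·)) + eSum (t.filter (· ≤ γ)) := by
        rw [hH]; exact add_le_add_right hLt _
    _ = eSum t := (eSum_split γ t).symm

lemma antilex_iff {s t : Finset Ordinal} : antilex s t ↔ eSum s < eSum t := by
  constructor
  · exact antilex_eSum_lt
  · intro h
    have hst : s ≠ t := fun he => absurd h (by rw [he]; exact lt_irrefl _)
    have hne : (s ∆ t).Nonempty := by
      rw [Finset.nonempty_iff_ne_empty]
      intro he
      exact hst (Finset.symmDiff_eq_empty.mp he)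
    have hmem := (s ∆ t).max'_mem hne
    rw [Finset.mem_symmDiff] at hmem
    rcases hmem with ⟨h1, h2⟩ | ⟨h1, _⟩
    · exfalso
      exact absurd (antilex_eSum_lt (antilex_of_max'_mem hne h1)) (not_lt.mpr h.le)
    · exact ⟨hne, h1⟩

/-- The order type of the finite subsets of `{β | β < α}`, ordered
antilexicographically, is `2 ^ α` (ordinal exponentiation). -/
theorem type_antilex_eq_two_opow (α : Ordinal) :
    ∃ hwo : IsWellOrder {s : Finset Ordinal // ∀ β ∈ s, β < α}
        (fun L₁ L₂ => antilex L₁.1 L₂.1),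
      @Ordinal.type {s : Finset Ordinal // ∀ β ∈ s, β < α} (fun L₁ L₂ => antilex L₁.1 L₂.1) hwo = Ordinal.lift.{1,0} ((2 : Ordinal) ^ α) := by
  let f : {s : Finset Ordinal // ∀ β ∈ s, β < α} → Set.Iio ((2:Ordinal) ^ α) :=
    fun s => ⟨eSum s.1, eSum_lt s.1 α s.2⟩
  have hbij : Function.Bijective f := by
    constructor
    · intro s t hst
      have he : eSum s.1 = eSum t.1 := congrArg Subtype.val hst
      ext1
      by_contra hs
      have hne : (s.1 ∆ t.1).Nonempty := by
        rw [Finset.nonempty_iff_ne_empty]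
        exact fun h => hs (Finset.symmDiff_eq_empty.mp h)
      have hmem := (s.1 ∆ t.1).max'_mem hne
      rw [Finset.mem_symmDiff] at hmem
      rcases hmem with ⟨h1, h2⟩ | ⟨h1, h2⟩
      · exact absurd (antilex_eSum_lt (antilex_of_max'_mem hne h1)) (by rw [he]; exact lt_irrefl _)
      · have : antilex s.1 t.1 := ⟨hne, h1⟩
        exact absurd (antilex_eSum_lt this) (by rw [he]; exact lt_irrefl _)
    · rintro ⟨o, ho⟩
      obtain ⟨s, hs, hes⟩ := eSum_surj o α ho
      exact ⟨⟨s, hs⟩, Subtype.ext hes⟩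
  let e1 : (fun (L₁ L₂ : {s : Finset Ordinal // ∀ β ∈ s, β < α}) => antilex L₁.1 L₂.1) ≃r
      ((· < ·) : Set.Iio ((2:Ordinal) ^ α) → Set.Iio ((2:Ordinal) ^ α) → Prop) :=
    ⟨Equiv.ofBijective f hbij, by
      intro s t
      simp only [Equiv.ofBijective_apply]
      exact (antilex_iff (s := s.1) (t := t.1)).symm⟩
  let e2 : ((· < ·) : Set.Iio ((2:Ordinal) ^ α) → Set.Iio ((2:Ordinal) ^ α) → Prop) ≃r
      ((· < ·) : ((2:Ordinal) ^ α).ToType → ((2:Ordinal) ^ α).ToType → Prop) :=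
    (Ordinal.ToType.mk (o := (2:Ordinal) ^ α)).toRelIsoLT
  let e := e1.trans e2
  haveI hinst : IsWellOrder ((2:Ordinal) ^ α).ToType (· < ·) := isWellOrder_lt
  have hwo : IsWellOrder {s : Finset Ordinal // ∀ β ∈ s, β < α}
      (fun L₁ L₂ => antilex L₁.1 L₂.1) := e.toRelEmbedding.isWellOrder
  refine ⟨hwo, ?_⟩
  have := e.ordinal_lift_type_eq
  rwa [Ordinal.lift_uzero, Ordinal.type_toType] at this
end

section
/- The map alpha ↦ L_alpha is an order isomorphism from the ordinals with their usual order onto the finite sets of ordinals with the antilexicographic order (L1 < L2 iff max(L1 △ L2) ∈ L2). -/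
open scoped Classical symmDiff

open Ordinal

lemma Lset_zero : Lset 0 = ∅ := by simp [Lset]

lemma mem_Lset_le_log {e α : Ordinal} (h : e ∈ Lset α) : e ≤ log 2 α := by
  simp only [Lset, List.mem_toFinset, List.mem_map] at h
  obtain ⟨x, hx, rfl⟩ := h
  exact CNF.fst_le_log hx

lemma Lset_ne_zero {α : Ordinal} (h : α ≠ 0) :
    Lset α = insert (log 2 α) (Lset (α % 2 ^ log 2 α)) := by
  simp [Lset, CNF.ne_zero h]

lemma log_mem_Lset {α : Ordinal} (h : α ≠ 0) : log 2 α ∈ Lset α := by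
  rw [Lset_ne_zero h]; exact Finset.mem_insert_self _ _

lemma mem_Lset_lt {α e x : Ordinal} (h : α < 2 ^ e) (hx : x ∈ Lset α) : x < e := by
  rcases eq_or_ne α 0 with rfl | hα
  · simp [Lset_zero] at hx
  · exact (mem_Lset_le_log hx).trans_lt ((lt_opow_iff_log_lt one_lt_two hα).1 h)

lemma div_opow_eq_one {α e : Ordinal} (h1 : 2 ^ e ≤ α) (h2 : α < 2 ^ (e + 1)) :
    α / 2 ^ e = 1 := by
  have hpos : (0 : Ordinal) < 2 ^ e := opow_pos _ (by norm_num)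
  have hle : 1 ≤ α / 2 ^ e := by
    rw [Ordinal.le_div hpos.ne']
    simpa using h1
  have hlt : α / 2 ^ e < 2 := by
    rw [Ordinal.div_lt hpos.ne']
    rwa [Ordinal.add_one_eq_succ, opow_succ] at h2
  have : α / 2 ^ e < 1 + 1 := by rwa [one_add_one_eq_two]
  rw [Ordinal.add_one_eq_succ] at this
  exact le_antisymm (Order.lt_succ_iff.1 this) hle

lemma opow_add_decomp {α e : Ordinal} (h : α < 2 ^ e) :
    log 2 (2 ^ e + α) = e ∧ (2 ^ e + α) % 2 ^ e = α := by
  have hpos : (0 : Ordinal) < 2 ^ e := opow_pos _ (by norm_num)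
  have hle : 2 ^ e ≤ 2 ^ e + α := le_self_add
  have hlt : 2 ^ e + α < 2 ^ (e + 1) := by
    have h22 : (2 : Ordinal) ^ (e + 1) = 2 ^ e + 2 ^ e := by
      rw [Ordinal.add_one_eq_succ, opow_succ,
        show (2 : Ordinal) = 1 + 1 from one_add_one_eq_two.symm, mul_add, mul_one]
    rw [h22]
    exact (add_lt_add_iff_left _).2 h
  have hne : 2 ^ e + α ≠ 0 := (hpos.trans_le hle).ne'
  have hlog : log 2 (2 ^ e + α) = e := by
    apply le_antisymm
    · have := (lt_opow_iff_log_lt one_lt_two hne).1 hlt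
      rwa [Ordinal.add_one_eq_succ, Order.lt_succ_iff] at this
    · exact (opow_le_iff_le_log one_lt_two hne).1 hle
  refine ⟨hlog, ?_⟩
  have hdiv : (2 ^ e + α) / 2 ^ e = 1 := div_opow_eq_one hle hlt
  have h2 := Ordinal.div_add_mod (2 ^ e + α) (2 ^ e)
  rw [hdiv, mul_one] at h2
  exact (add_right_inj _).1 h2

lemma Lset_opow_add {α e : Ordinal} (h : α < 2 ^ e) :
    Lset (2 ^ e + α) = insert e (Lset α) := by
  obtain ⟨hlog, hmod⟩ := opow_add_decomp h
  have hpos : (0 : Ordinal) < 2 ^ e := opow_pos _ (by norm_num)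
  have hne : 2 ^ e + α ≠ 0 := (hpos.trans_le (le_self_add)).ne'
  rw [Lset_ne_zero hne, hlog, hmod]

lemma self_decomp {α : Ordinal} (h : α ≠ 0) :
    α = 2 ^ log 2 α + α % 2 ^ log 2 α := by
  have hle : 2 ^ log 2 α ≤ α := opow_log_le_self 2 h
  have hlt : α < 2 ^ (log 2 α + 1) := by
    have := lt_opow_succ_log_self one_lt_two α
    rwa [← Ordinal.add_one_eq_succ] at this
  have hdiv : α / 2 ^ log 2 α = 1 := div_opow_eq_one hle hlt
  have h2 := Ordinal.div_add_mod α (2 ^ log 2 α)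
  rw [hdiv, mul_one] at h2
  exact h2.symm

lemma Lset_nonempty {α : Ordinal} (h : α ≠ 0) : (Lset α).Nonempty :=
  ⟨_, log_mem_Lset h⟩

lemma lt_of_log_lt {α β : Ordinal} (hβ : β ≠ 0) (h : log 2 α < log 2 β) : α < β :=
  calc α < 2 ^ (log 2 α + 1) := by
        have := lt_opow_succ_log_self one_lt_two α
        rwa [← Ordinal.add_one_eq_succ] at this
    _ ≤ 2 ^ log 2 β := by
        apply opow_le_opow_right (by norm_num)
        rwa [Ordinal.add_one_eq_succ, Order.succ_le_iff]
    _ ≤ β := opow_log_le_self 2 hβ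

lemma antilex_of_log_lt {α β : Ordinal} (hβ : β ≠ 0) (h : log 2 α < log 2 β) :
    antilex (Lset α) (Lset β) := by
  have hnb : log 2 β ∉ Lset α := fun hm => absurd (mem_Lset_le_log hm) h.not_ge
  have hmem : log 2 β ∈ Lset α ∆ Lset β :=
    Finset.mem_symmDiff.2 (Or.inr ⟨log_mem_Lset hβ, hnb⟩)
  refine ⟨⟨_, hmem⟩, ?_⟩
  have hmax : (Lset α ∆ Lset β).max' ⟨_, hmem⟩ = log 2 β := by
    refine le_antisymm (Finset.max'_le _ _ _ fun x hx => ?_) (Finset.le_max' _ _ hmem)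
    rcases Finset.mem_symmDiff.1 hx with ⟨hx, -⟩ | ⟨hx, -⟩
    · exact (mem_Lset_le_log hx).trans h.le
    · exact mem_Lset_le_log hx
  rw [hmax]
  exact log_mem_Lset hβ

lemma not_antilex_of_log_lt {α β : Ordinal} (hα : α ≠ 0) (h : log 2 β < log 2 α) :
    ¬ antilex (Lset α) (Lset β) := by
  rintro ⟨hne, hmem⟩
  have hna : log 2 α ∉ Lset β := fun hm => absurd (mem_Lset_le_log hm) h.not_ge
  have hmemd : log 2 α ∈ Lset α ∆ Lset β :=
    Finset.mem_symmDiff.2 (Or.inl ⟨log_mem_Lset hα, hna⟩)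
  have hmax : (Lset α ∆ Lset β).max' hne = log 2 α := by
    refine le_antisymm (Finset.max'_le _ _ _ fun x hx => ?_) (Finset.le_max' _ _ hmemd)
    rcases Finset.mem_symmDiff.1 hx with ⟨hx, -⟩ | ⟨hx, -⟩
    · exact mem_Lset_le_log hx
    · exact (mem_Lset_le_log hx).trans h.le
  rw [hmax] at hmem
  exact hna hmem

lemma symmDiff_insert {a : Ordinal} {S T : Finset Ordinal} (hS : a ∉ S) (hT : a ∉ T) :
    insert a S ∆ insert a T = S ∆ T := by
  ext x
  simp only [Finset.mem_symmDiff, Finset.mem_insert]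
  constructor
  · rintro (⟨hx1, hx2⟩ | ⟨hx1, hx2⟩)
    · rcases hx1 with rfl | hx1
      · exact absurd (Or.inl rfl) hx2
      · exact Or.inl ⟨hx1, fun hh => hx2 (Or.inr hh)⟩
    · rcases hx1 with rfl | hx1
      · exact absurd (Or.inl rfl) hx2
      · exact Or.inr ⟨hx1, fun hh => hx2 (Or.inr hh)⟩
  · rintro (⟨hx1, hx2⟩ | ⟨hx1, hx2⟩)
    · exact Or.inl ⟨Or.inr hx1, by rintro (rfl | hh); exacts [hS hx1, hx2 hh]⟩
    · exact Or.inr ⟨Or.inr hx1, by rintro (rfl | hh); exacts [hT hx1, hx2 hh]⟩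

lemma max'_congr {S T : Finset Ordinal} (h : S = T) (hS : S.Nonempty)
    (hT : T.Nonempty) : S.max' hS = T.max' hT := by subst h; rfl

lemma antilex_key : ∀ α β : Ordinal, α < β ↔ antilex (Lset α) (Lset β) := by
  intro α
  induction α using Ordinal.induction with
  | _ α IH =>
  intro β
  rcases eq_or_ne α 0 with rfl | hα
  · rcases eq_or_ne β 0 with rfl | hβ
    · refine iff_of_false (lt_irrefl _) ?_
      rintro ⟨h, -⟩
      simp [Lset_zero] at h
    · refine iff_of_true (pos_iff_ne_zero.2 hβ) ?_
      have hne : (Lset 0 ∆ Lset β).Nonempty :=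
        ⟨log 2 β, Finset.mem_symmDiff.2 (Or.inr ⟨log_mem_Lset hβ, by simp [Lset_zero]⟩)⟩
      refine ⟨hne, ?_⟩
      rcases Finset.mem_symmDiff.1 (Finset.max'_mem _ hne) with ⟨h2, -⟩ | ⟨h2, -⟩
      · simp [Lset_zero] at h2
      · exact h2
  rcases eq_or_ne β 0 with rfl | hβ
  · refine iff_of_false (not_lt_zero (a := α)) ?_
    rintro ⟨hne, hmem⟩
    simp [Lset_zero] at hmem
  have hα₀ : α % 2 ^ log 2 α < 2 ^ log 2 α :=
    Ordinal.mod_lt _ (opow_pos _ (by norm_num : (0:Ordinal) < 2)).ne'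
  have hβ₀ : β % 2 ^ log 2 β < 2 ^ log 2 β :=
    Ordinal.mod_lt _ (opow_pos _ (by norm_num : (0:Ordinal) < 2)).ne'
  rcases lt_trichotomy (log 2 α) (log 2 β) with hab | hab | hab
  · exact iff_of_true (lt_of_log_lt hβ hab) (antilex_of_log_lt hβ hab)
  · -- equal logs
    have hα₀' : α % 2 ^ log 2 β < 2 ^ log 2 β := by rw [← hab]; exact hα₀
    have haS : log 2 β ∉ Lset (α % 2 ^ log 2 β) :=
      fun hh => lt_irrefl _ (mem_Lset_lt hα₀' hh)
    have hbS : log 2 β ∉ Lset (β % 2 ^ log 2 β) :=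
      fun hh => lt_irrefl _ (mem_Lset_lt hβ₀ hh)
    have hlt : α < β ↔ α % 2 ^ log 2 β < β % 2 ^ log 2 β := by
      conv_lhs => rw [self_decomp hα, self_decomp hβ, hab]
      exact add_lt_add_iff_left _
    have hsd : Lset α ∆ Lset β =
        Lset (α % 2 ^ log 2 β) ∆ Lset (β % 2 ^ log 2 β) := by
      rw [Lset_ne_zero hα, Lset_ne_zero hβ, hab]
      exact symmDiff_insert haS hbS
    have hbound : ∀ x ∈ Lset (α % 2 ^ log 2 β) ∆ Lset (β % 2 ^ log 2 β),
        x < log 2 β := by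
      intro x hx
      rcases Finset.mem_symmDiff.1 hx with ⟨hx, -⟩ | ⟨hx, -⟩
      · exact mem_Lset_lt hα₀' hx
      · exact mem_Lset_lt hβ₀ hx
    have hanti : antilex (Lset α) (Lset β) ↔
        antilex (Lset (α % 2 ^ log 2 β)) (Lset (β % 2 ^ log 2 β)) := by
      constructor
      · rintro ⟨hne, hmem⟩
        have hne' : (Lset (α % 2 ^ log 2 β) ∆ Lset (β % 2 ^ log 2 β)).Nonempty :=
          hsd ▸ hne
        refine ⟨hne', ?_⟩
        have hmx := max'_congr hsd hne hne'
        have hmem2 : (Lset (α % 2 ^ log 2 β) ∆ Lset (β % 2 ^ log 2 β)).max' hne'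
            ∈ Lset β := hmx ▸ hmem
        rw [Lset_ne_zero hβ] at hmem2
        rcases Finset.mem_insert.1 hmem2 with hmem2 | hmem2
        · exact absurd (hmem2 ▸ hbound _ (Finset.max'_mem _ hne')) (lt_irrefl _)
        · exact hmem2
      · rintro ⟨hne', hmem'⟩
        have hne : (Lset α ∆ Lset β).Nonempty := hsd.symm ▸ hne'
        refine ⟨hne, ?_⟩
        rw [max'_congr hsd hne hne', Lset_ne_zero hβ]
        exact Finset.mem_insert_of_mem hmem'
    rw [hlt, hanti]
    apply IH
    calc α % 2 ^ log 2 β < 2 ^ log 2 β := hα₀'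
      _ ≤ α := by rw [← hab]; exact opow_log_le_self 2 hα
  · exact iff_of_false (not_lt.2 (lt_of_log_lt hα hab).le)
      (not_antilex_of_log_lt hα hab)

/-- `α ↦ L_α` is an order isomorphism from the ordinals with their usual order
onto the finite sets of ordinals with the antilexicographic order. -/
theorem Lset_orderIso :
    Function.Bijective Lset ∧ ∀ α β : Ordinal, α < β ↔ antilex (Lset α) (Lset β) := by
  refine ⟨⟨?_, ?_⟩, antilex_key⟩
  · intro α β h
    by_contra hne
    rcases lt_or_gt_of_ne hne with hl | hl
    · obtain ⟨hne', -⟩ := (antilex_key _ _).1 hl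
      rw [h, symmDiff_self] at hne'
      exact Finset.not_nonempty_empty hne'
    · obtain ⟨hne', -⟩ := (antilex_key _ _).1 hl
      rw [h, symmDiff_self] at hne'
      exact Finset.not_nonempty_empty hne'
  · intro S
    induction S using Finset.strongInduction with
    | _ S IH =>
    rcases S.eq_empty_or_nonempty with rfl | hS
    · exact ⟨0, Lset_zero⟩
    · have hmem := S.max'_mem hS
      obtain ⟨α', hα'⟩ := IH (S.erase (S.max' hS)) (Finset.erase_ssubset hmem)
      have hlt : α' < 2 ^ S.max' hS := by
        rcases eq_or_ne α' 0 with rfl | h0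
        · exact opow_pos _ (by norm_num)
        · have hmem' : log 2 α' ∈ S.erase (S.max' hS) := hα' ▸ log_mem_Lset h0
          have hlm : log 2 α' < S.max' hS :=
            lt_of_le_of_ne (S.le_max' _ (Finset.mem_of_mem_erase hmem'))
              (Finset.ne_of_mem_erase hmem')
          calc α' < 2 ^ (log 2 α' + 1) := by
                have := lt_opow_succ_log_self one_lt_two α'
                rwa [← Ordinal.add_one_eq_succ] at this
            _ ≤ 2 ^ S.max' hS := by
                apply opow_le_opow_right (by norm_num)
                rwa [Ordinal.add_one_eq_succ, Order.succ_le_iff]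
      exact ⟨2 ^ S.max' hS + α', by
        rw [Lset_opow_add hlt, hα', Finset.insert_erase hmem]⟩
end

section
/- The family consisting of all sets D(eta,h) = {alpha : for all k < eta, k ◁ alpha iff eta*h + k ◁ alpha} (for eta = 2^eta a fixed point and h an ordinal) together with all cones C(beta) = {alpha : L_beta ⊆ L_alpha} has the finite intersection property: every finite subfamily has nonempty intersection. -/
open scoped Classical symmDiff

/-- Formal inclusion: `α ⊑ β` iff `L_α ⊆ L_β`. -/
def fincl (α β : Ordinal) : Prop := Lset α ⊆ Lset β

/-- Formal membership: `β ◁ α` iff `2^β` appears in the base-2 normal form of `α`. -/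
def fmem (β α : Ordinal) : Prop := β ∈ Lset α

namespace FIPAux

open Ordinal

/-! ### Realizing any finite set of exponents as an `Lset`. -/

/-- Sum of powers of two over a list of exponents. -/
noncomputable def osum : List Ordinal → Ordinal
  | [] => 0
  | e :: l => 2 ^ e + osum l

lemma osum_lt {l : List Ordinal} (hl : l.Pairwise (· > ·)) {b : Ordinal}
    (hb : ∀ x ∈ l, x < b) : osum l < 2 ^ b := by
  induction l generalizing b with
  | nil => simpa [osum] using opow_pos b (by norm_num : (0 : Ordinal) < 2)
  | cons e l ih =>
    have he : e < b := hb e (by simp)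
    have h1 : osum l < 2 ^ e := ih hl.of_cons (fun x hx => List.rel_of_pairwise_cons hl hx)
    have h2 : (2 : Ordinal) ^ e + osum l < 2 ^ e + 2 ^ e :=
      add_lt_add_right h1 _
    have h3 : (2 : Ordinal) ^ e + 2 ^ e = 2 ^ (e + 1) := by
      rw [add_one_eq_succ, opow_succ, (by norm_num : (2 : Ordinal) = 1 + 1), mul_add, mul_one]
    have h4 : (2 : Ordinal) ^ (e + 1) ≤ 2 ^ b := by
      apply opow_le_opow_right (by norm_num)
      rwa [add_one_eq_succ, Order.succ_le_iff]
    calc osum (e :: l) = 2 ^ e + osum l := rfl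
      _ < 2 ^ e + 2 ^ e := h2
      _ = 2 ^ (e + 1) := h3
      _ ≤ 2 ^ b := h4

lemma CNF_osum {l : List Ordinal} (hl : l.Pairwise (· > ·)) :
    Ordinal.CNF 2 (osum l) = l.map (fun e => (e, 1)) := by
  induction l with
  | nil => simp [osum]
  | cons e l ih =>
    have hs : osum l < 2 ^ e := osum_lt hl.of_cons (fun x hx => List.rel_of_pairwise_cons hl hx)
    have hpos : (0 : Ordinal) < 2 ^ e := opow_pos e (by norm_num)
    have hx0 : osum (e :: l) ≠ 0 := by
      have : (0 : Ordinal) < 2 ^ e + osum l := lt_of_lt_of_le hpos (le_self_add)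
      exact this.ne'
    have hlog : log 2 (osum (e :: l)) = e := by
      apply le_antisymm
      · have hlt : osum (e :: l) < 2 ^ (e + 1) := by
          show (2 : Ordinal) ^ e + osum l < 2 ^ (e + 1)
          calc (2 : Ordinal) ^ e + osum l < 2 ^ e + 2 ^ e := add_lt_add_right hs _
            _ = 2 ^ (e + 1) := by
              rw [add_one_eq_succ, opow_succ, (by norm_num : (2 : Ordinal) = 1 + 1),
                mul_add, mul_one]
        have := (lt_opow_iff_log_lt (by norm_num : (1 : Ordinal) < 2) hx0).1 hlt
        rwa [add_one_eq_succ, Order.lt_succ_iff] at this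
      · exact le_log_of_opow_le (by norm_num) (le_self_add)
    have hrw : osum (e :: l) = 2 ^ e * 1 + osum l := by
      show (2 : Ordinal) ^ e + osum l = 2 ^ e * 1 + osum l
      rw [mul_one]
    have hdiv : osum (e :: l) / 2 ^ e = 1 := by
      rw [hrw, mul_add_div _ hpos.ne', div_eq_zero_of_lt hs, add_zero]
    have hmod : osum (e :: l) % 2 ^ e = osum l := by
      rw [hrw, mul_add_mod_self, mod_eq_of_lt hs]
    rw [Ordinal.CNF.ne_zero hx0, hlog, hdiv, hmod, ih hl.of_cons, List.map_cons]

/-- Every finite set of ordinals is the `Lset` of some ordinal. -/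
lemma exists_Lset (E : Finset Ordinal) : ∃ α : Ordinal, Lset α = E := by
  refine ⟨osum (E.sort (· ≥ ·)), ?_⟩
  have hs : (E.sort (· ≥ ·)).Pairwise (· > ·) := List.sortedGT_iff_pairwise.1 (Finset.sortedGT_sort E)
  unfold Lset
  rw [CNF_osum hs, List.map_map]
  have : (Prod.fst ∘ fun e => ((e : Ordinal), (1 : Ordinal))) = id := rfl
  rw [this, List.map_id]
  exact Finset.sort_toFinset E _

/-! ### The digit-set construction. -/

/-- Given a descending divisibility chain `L` of moduli and a finite set `G` of
"generators", `Fset L G` is the finite set of all ordinals obtained by choosing,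
at each modulus level, a digit which is either `0` or the corresponding digit of
some generator, with the low part an iterated remainder of a generator. -/
noncomputable def Fset : List Ordinal → Finset Ordinal → Finset Ordinal
  | [], G => insert 0 G
  | η :: L, G =>
      ((insert (0 : Ordinal) (G.image (· / η))) ×ˢ Fset L (G.image (· % η))).image
        (fun p => η * p.1 + p.2)

lemma mem_Fset_cons {η : Ordinal} {L : List Ordinal} {G : Finset Ordinal} {x : Ordinal} :
    x ∈ Fset (η :: L) G ↔
      ∃ q ∈ insert (0 : Ordinal) (G.image (· / η)),
        ∃ y ∈ Fset L (G.image (· % η)), x = η * q + y := by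
  simp only [Fset, Finset.mem_image, Finset.mem_product]
  constructor
  · rintro ⟨⟨q, y⟩, ⟨hq, hy⟩, rfl⟩
    exact ⟨q, hq, y, hy, rfl⟩
  · rintro ⟨q, hq, y, hy, rfl⟩
    exact ⟨(q, y), ⟨hq, hy⟩, rfl⟩

lemma subset_Fset : ∀ (L : List Ordinal) (G : Finset Ordinal), G ⊆ Fset L G := by
  intro L
  induction L with
  | nil => intro G; exact Finset.subset_insert _ _
  | cons η L ih =>
    intro G g hg
    rw [mem_Fset_cons]
    refine ⟨g / η, ?_, g % η, ?_, (div_add_mod g η).symm⟩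
    · exact Finset.mem_insert_of_mem (Finset.mem_image_of_mem _ hg)
    · exact ih _ (Finset.mem_image_of_mem _ hg)

lemma Fset_lt : ∀ (L : List Ordinal) (G : Finset Ordinal) {β : Ordinal}, 0 < β →
    (∀ g ∈ G, g < β) → (∀ μ ∈ L, μ ∣ β) →
    List.Pairwise (fun a b => b ∣ a) L →
    ∀ x ∈ Fset L G, x < β := by
  intro L
  induction L with
  | nil =>
    intro G β hβ hG _ _ x hx
    rcases Finset.mem_insert.1 hx with rfl | hx
    · exact hβ
    · exact hG x hx
  | cons η L ih =>
    intro G β hβ hG hdvd hpw x hx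
    have hηβ : η ∣ β := hdvd η (by simp)
    have hη : 0 < η := by
      rcases eq_or_ne η 0 with rfl | h
      · exact absurd (zero_dvd_iff.1 hηβ) hβ.ne'
      · exact pos_iff_ne_zero.2 h
    rw [mem_Fset_cons] at hx
    obtain ⟨q, hq, y, hy, rfl⟩ := hx
    have hyη : y < η := by
      refine ih _ hη (fun g' hg' => ?_) (fun μ hμ => ?_) hpw.of_cons y hy
      · obtain ⟨g, _, rfl⟩ := Finset.mem_image.1 hg'
        exact mod_lt g hη.ne'
      · exact (List.pairwise_cons.1 hpw).1 μ hμ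
    rcases Finset.mem_insert.1 hq with rfl | hq
    · rw [mul_zero, zero_add]
      exact hyη.trans_le (le_of_dvd hβ.ne' hηβ)
    · obtain ⟨g, hg, rfl⟩ := Finset.mem_image.1 hq
      obtain ⟨δ, rfl⟩ := hηβ
      have h1 : η * (g / η) < η * δ := lt_of_le_of_lt (mul_div_le g η) (hG g hg)
      have h2 : g / η < δ := (mul_lt_mul_iff_right₀ hη).1 h1
      have h3 : g / η + 1 ≤ δ := by rwa [add_one_eq_succ, Order.succ_le_iff]
      calc η * (g / η) + y < η * (g / η) + η := add_lt_add_right hyη _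
        _ = η * (g / η + 1) := by rw [mul_add, mul_one]
        _ ≤ η * δ := mul_le_mul_right h3 η

lemma up : ∀ (L : List Ordinal) (G : Finset Ordinal) {μ c k : Ordinal},
    List.Pairwise (fun a b => b ∣ a) L → (∀ ν ∈ L, 0 < ν) →
    μ ∈ L → c ∈ G → μ ∣ c → k ∈ Fset L G → k < μ → c + k ∈ Fset L G := by
  intro L
  induction L with
  | nil => intro _ _ _ _ _ _ h; exact absurd h (List.not_mem_nil)
  | cons η L ih =>
    intro G μ c k hpw hpos hμ hc hμc hk hkμ
    have hη : 0 < η := hpos η (by simp)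
    have hμη : μ ∣ η := by
      rcases List.mem_cons.1 hμ with rfl | hμ'
      · exact dvd_rfl
      · exact (List.pairwise_cons.1 hpw).1 μ hμ'
    have hμη' : μ ≤ η := le_of_dvd hη.ne' hμη
    rw [mem_Fset_cons] at hk
    obtain ⟨q, hq, y, hy, rfl⟩ := hk
    -- the top digit of k must be zero
    have hq0 : q = 0 := by
      by_contra h
      have h1 : η ≤ η * q := by
        conv_lhs => rw [← mul_one η]
        exact mul_le_mul_right (Ordinal.one_le_iff_ne_zero.2 h) η
      have h2 : η * q ≤ η * q + y := le_self_add
      exact absurd ((h1.trans h2).trans_lt (hkμ.trans_le hμη')) (lt_irrefl η)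
    subst hq0
    simp only [mul_zero, zero_add] at hkμ ⊢
    rcases List.mem_cons.1 hμ with rfl | hμ'
    · -- μ = η : put the digits of c at the top level
      rw [mem_Fset_cons]
      refine ⟨c / μ, Finset.mem_insert_of_mem (Finset.mem_image_of_mem _ hc), y, hy, ?_⟩
      obtain ⟨t, rfl⟩ := hμc
      rw [mul_div_cancel t hη.ne']
    · -- μ in the tail: recurse with c % η
      have hcη : c % η ∈ G.image (· % η) := Finset.mem_image_of_mem _ hc
      have hμcη : μ ∣ c % η := by
        apply dvd_of_mod_eq_zero
        rw [mod_mod_of_dvd c hμη, mod_eq_zero_of_dvd hμc]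
      have hrec : c % η + y ∈ Fset L (G.image (· % η)) :=
        ih _ hpw.of_cons (fun ν hν => hpos ν (by simp [hν])) hμ' hcη hμcη hy hkμ
      rw [mem_Fset_cons]
      refine ⟨c / η, Finset.mem_insert_of_mem (Finset.mem_image_of_mem _ hc),
        c % η + y, hrec, ?_⟩
      rw [← add_assoc, div_add_mod]

lemma down : ∀ (L : List Ordinal) (G : Finset Ordinal) {μ c x : Ordinal},
    List.Pairwise (fun a b => b ∣ a) L → (∀ ν ∈ L, 0 < ν) →
    μ ∈ L → c ∈ G → μ ∣ c → x ∈ Fset L G → c ≤ x → x < c + μ →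
    ∃ k, k < μ ∧ x = c + k ∧ k ∈ Fset L G := by
  intro L
  induction L with
  | nil => intro _ _ _ _ _ _ h; exact absurd h (List.not_mem_nil)
  | cons η L ih =>
    intro G μ c x hpw hpos hμ hc hμc hx hcx hxcμ
    have hη : 0 < η := hpos η (by simp)
    have hμη : μ ∣ η := by
      rcases List.mem_cons.1 hμ with rfl | hμ'
      · exact dvd_rfl
      · exact (List.pairwise_cons.1 hpw).1 μ hμ'
    have hμpos : 0 < μ := by
      rcases eq_or_ne μ 0 with rfl | h
      · exact absurd (zero_dvd_iff.1 hμη) hη.ne'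
      · exact pos_iff_ne_zero.2 h
    rw [mem_Fset_cons] at hx
    obtain ⟨q, hq, y, hy, rfl⟩ := hx
    have hyη : y < η := by
      refine Fset_lt L _ hη (fun g' hg' => ?_) (fun ν hν => ?_) hpw.of_cons y hy
      · obtain ⟨g, _, rfl⟩ := Finset.mem_image.1 hg'
        exact mod_lt g hη.ne'
      · exact (List.pairwise_cons.1 hpw).1 ν hν
    set a := c / η with ha
    set r := c % η with hr
    have hcar : η * a + r = c := div_add_mod c η
    have hrμ : μ ∣ r := by
      apply dvd_of_mod_eq_zero
      rw [hr, mod_mod_of_dvd c hμη, mod_eq_zero_of_dvd hμc]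
    have hrμη : r + μ ≤ η := by
      obtain ⟨t, ht⟩ := hrμ
      obtain ⟨δ, hδ⟩ := hμη
      have hrlt : r < η := mod_lt c hη.ne'
      rw [ht, hδ] at hrlt ⊢
      have h2 : t < δ := (mul_lt_mul_iff_right₀ hμpos).1 hrlt
      have h3 : t + 1 ≤ δ := by rwa [add_one_eq_succ, Order.succ_le_iff]
      calc μ * t + μ = μ * (t + 1) := by rw [mul_add, mul_one]
        _ ≤ μ * δ := mul_le_mul_right h3 μ
    -- show q = a
    have hqa : q = a := by
      have hub : η * q + y < η * (q + 1) := by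
        rw [mul_add, mul_one]; exact add_lt_add_right hyη _
      have hub' : η * q + y < η * (a + 1) := by
        calc η * q + y < c + μ := hxcμ
          _ = η * a + (r + μ) := by rw [← hcar, add_assoc]
          _ ≤ η * a + η := add_le_add_right hrμη _
          _ = η * (a + 1) := by rw [mul_add, mul_one]
      have hlb : η * a ≤ η * q + y := by
        calc η * a ≤ η * a + r := le_self_add
          _ = c := hcar
          _ ≤ η * q + y := hcx
      have hlb' : η * q ≤ η * q + y := le_self_add
      have h1 : q ≤ a := by
        have := hlb'.trans_lt hub'
        rw [mul_lt_mul_iff_right₀ hη, add_one_eq_succ, Order.lt_succ_iff] at this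
        exact this
      have h2 : a ≤ q := by
        have := hlb.trans_lt hub
        rw [mul_lt_mul_iff_right₀ hη, add_one_eq_succ, Order.lt_succ_iff] at this
        exact this
      exact le_antisymm h1 h2
    subst hqa
    have hry : r ≤ y := by
      have : η * a + r ≤ η * a + y := by rw [hcar]; exact hcx
      exact (add_le_add_iff_left _).1 this
    have hyrμ : y < r + μ := by
      have : η * a + y < η * a + (r + μ) := by
        rw [← add_assoc, hcar]; exact hxcμ
      exact (add_lt_add_iff_left _).1 this
    rcases List.mem_cons.1 hμ with rfl | hμ'
    · -- μ = η, so r = 0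
      have hr0 : r = 0 := by rw [hr, mod_eq_zero_of_dvd hμc]
      rw [hr0, add_zero] at hcar
      rw [hr0, zero_add] at hyrμ
      refine ⟨y, hyrμ, by rw [← hcar], ?_⟩
      rw [mem_Fset_cons]
      exact ⟨0, Finset.mem_insert_self _ _, y, hy, by rw [mul_zero, zero_add]⟩
    · -- μ in the tail: recurse
      have hrG : r ∈ G.image (· % η) := Finset.mem_image_of_mem _ hc
      obtain ⟨k, hkμ, hyk, hkF⟩ :=
        ih _ hpw.of_cons (fun ν hν => hpos ν (by simp [hν])) hμ' hrG hrμ hy hry hyrμ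
      refine ⟨k, hkμ, ?_, ?_⟩
      · rw [hyk, ← add_assoc, hcar]
      · rw [mem_Fset_cons]
        exact ⟨0, Finset.mem_insert_self _ _, k, hkF, by rw [mul_zero, zero_add]⟩

/-- Fixed points of `2 ^ ·` divide each other. -/
lemma fp_dvd {a b : Ordinal} (ha : (2 : Ordinal) ^ a = a) (hb : (2 : Ordinal) ^ b = b)
    (hab : a ≤ b) : a ∣ b :=
  ⟨2 ^ (b - a), by
    conv_lhs => rw [← hb, ← Ordinal.add_sub_cancel_of_le hab, opow_add, ha]⟩

lemma fp_pos {a : Ordinal} (ha : (2 : Ordinal) ^ a = a) : 0 < a := by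
  rcases eq_or_ne a 0 with rfl | h
  · rw [opow_zero] at ha; exact absurd ha one_ne_zero
  · exact pos_iff_ne_zero.2 h

/-- The main combinatorial lemma: there is a finite set `E` of exponents
containing `B` and closed (in the iff sense) under all the translations. -/
lemma main (P : Finset (Ordinal × Ordinal)) (hP : ∀ p ∈ P, (2 : Ordinal) ^ p.1 = p.1)
    (B : Finset Ordinal) :
    ∃ E : Finset Ordinal, B ⊆ E ∧
      ∀ p ∈ P, ∀ k < p.1, (k ∈ E ↔ p.1 * p.2 + k ∈ E) := by
  set N : Finset Ordinal := P.image Prod.fst with hN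
  set L : List Ordinal := N.sort (· ≥ ·) with hL
  set G : Finset Ordinal := B ∪ P.image (fun p => p.1 * p.2) with hG
  have hmemL : ∀ μ, μ ∈ L ↔ μ ∈ N := fun μ => Finset.mem_sort _
  have hfix : ∀ μ ∈ L, (2 : Ordinal) ^ μ = μ := by
    intro μ hμ
    obtain ⟨p, hp, rfl⟩ := Finset.mem_image.1 ((hmemL μ).1 hμ)
    exact hP p hp
  have hpos : ∀ ν ∈ L, 0 < ν := fun ν hν => fp_pos (hfix ν hν)
  have hpw : List.Pairwise (fun a b => b ∣ a) L := by
    have hs : L.Pairwise (· > ·) := List.sortedGT_iff_pairwise.1 (Finset.sortedGT_sort N)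
    exact hs.imp_of_mem (fun {a b} ha hb h =>
      fp_dvd (hfix b hb) (hfix a ha) h.le)
  refine ⟨Fset L G, fun b hb => subset_Fset L G (Finset.mem_union_left _ hb), ?_⟩
  intro p hp k hk
  have hμL : p.1 ∈ L := (hmemL p.1).2 (Finset.mem_image_of_mem _ hp)
  have hcG : p.1 * p.2 ∈ G := Finset.mem_union_right _ (Finset.mem_image_of_mem _ hp)
  have hμc : p.1 ∣ p.1 * p.2 := dvd_mul_right _ _
  constructor
  · intro hkE
    exact up L G hpw hpos hμL hcG hμc hkE hk
  · intro hxE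
    obtain ⟨k', hk', heq, hk'E⟩ := down L G hpw hpos hμL hcG hμc hxE
      (le_self_add) (add_lt_add_right hk _)
    rwa [add_left_cancel heq]

end FIPAux

/-- The family of all sets `D(η,h)` (for fixed points `η = 2^η`) together with
all cones `C(β)` has the finite intersection property. -/
theorem fip_complete_and_cones :
    ∀ 𝒜 : Finset (Set Ordinal),
      (↑𝒜 : Set (Set Ordinal)) ⊆
        ({S | ∃ η h : Ordinal, (2 : Ordinal) ^ η = η ∧
            S = {α | ∀ k < η, (fmem k α ↔ fmem (η * h + k) α)}} ∪
          {S | ∃ β : Ordinal, S = {α | Lset β ⊆ Lset α}}) →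
      ∃ α : Ordinal, ∀ S ∈ 𝒜, α ∈ S := by
  intro 𝒜 h𝒜
  -- extract the data
  have key : ∀ 𝒜 : Finset (Set Ordinal),
      (↑𝒜 : Set (Set Ordinal)) ⊆
        ({S | ∃ η h : Ordinal, (2 : Ordinal) ^ η = η ∧
            S = {α | ∀ k < η, (fmem k α ↔ fmem (η * h + k) α)}} ∪
          {S | ∃ β : Ordinal, S = {α | Lset β ⊆ Lset α}}) →
      ∃ (P : Finset (Ordinal × Ordinal)) (B : Finset Ordinal),
        (∀ p ∈ P, (2 : Ordinal) ^ p.1 = p.1) ∧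
        ∀ S ∈ 𝒜,
          (∃ p ∈ P, S = {α | ∀ k < p.1, (fmem k α ↔ fmem (p.1 * p.2 + k) α)}) ∨
          (∃ β : Ordinal, Lset β ⊆ B ∧ S = {α | Lset β ⊆ Lset α}) := by
    intro 𝒜
    induction 𝒜 using Finset.induction_on with
    | empty => exact fun _ => ⟨∅, ∅, by simp, by simp⟩
    | insert S 𝒜' hS ih =>
      intro h
      have hS' := h (by simp : S ∈ (↑(insert S 𝒜') : Set (Set Ordinal)))
      obtain ⟨P, B, hP, hall⟩ := ih (fun T hT => h (by
        simp only [Finset.coe_insert, Set.mem_insert_iff]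
        exact Or.inr hT))
      rcases hS' with ⟨η, hh, hfix, rfl⟩ | ⟨β, rfl⟩
      · refine ⟨insert (η, hh) P, B, ?_, ?_⟩
        · intro p hp
          rcases Finset.mem_insert.1 hp with rfl | hp
          · exact hfix
          · exact hP p hp
        · intro T hT
          rcases Finset.mem_insert.1 hT with rfl | hT
          · exact Or.inl ⟨(η, hh), Finset.mem_insert_self _ _, rfl⟩
          · rcases hall T hT with ⟨p, hp, rfl⟩ | hcone
            · exact Or.inl ⟨p, Finset.mem_insert_of_mem hp, rfl⟩
            · exact Or.inr hcone
      · refine ⟨P, B ∪ Lset β, hP, ?_⟩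
        intro T hT
        rcases Finset.mem_insert.1 hT with rfl | hT
        · exact Or.inr ⟨β, Finset.subset_union_right, rfl⟩
        · rcases hall T hT with hD | ⟨β', hβ', rfl⟩
          · exact Or.inl hD
          · exact Or.inr ⟨β', hβ'.trans Finset.subset_union_left, rfl⟩
  obtain ⟨P, B, hP, hall⟩ := key 𝒜 h𝒜
  obtain ⟨E, hBE, hE⟩ := FIPAux.main P hP B
  obtain ⟨α, hα⟩ := FIPAux.exists_Lset E
  refine ⟨α, fun S hS => ?_⟩
  rcases hall S hS with ⟨p, hp, rfl⟩ | ⟨β, hβB, rfl⟩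
  · intro k hk
    show k ∈ Lset α ↔ p.1 * p.2 + k ∈ Lset α
    rw [hα]
    exact hE p hp k hk
  · show Lset β ⊆ Lset α
    rw [hα]
    exact hβB.trans hBE
end
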